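/- If G is a finite perfect POEC group of order p1^{a1}·...·pk^{ak} (p_i distinct primes), then a_i ≥ 2 for every i, i.e., p^2 divides |G| for every prime p dividing |G|. -/

import Mathlib

def POEC (G : Type*) [Group G] : Prop :=
  ∀ x y : G, (orderOf x).Prime → (orderOf y).Prime → Commute x y

/-- Automorphism groups of cyclic groups are commutative. -/
lemma mulAut_comm_of_isCyclic {H : Type*} [Group H] [IsCyclic H] (a b : MulAut H) :
    a * b = b * a := by
  obtain ⟨z, hz⟩ := IsCyclic.exists_generator (α := H)
  ext x
  obtain ⟨k, rfl⟩ := hz x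
  obtain ⟨i, hi⟩ := hz (a z)
  obtain ⟨j, hj⟩ := hz (b z)
  simp only [MulAut.mul_apply, map_zpow, ← hi, ← hj, ← zpow_mul]
  ring_nf

set_option maxHeartbeats 1600000 in
theorem stmt_16 {G : Type*} [Group G] [Finite G] (h : POEC G)
    (hperf : commutator G = ⊤) :
    ∀ p : ℕ, p.Prime → p ∣ Nat.card G → p ^ 2 ∣ Nat.card G := by
  intro p hp hpdvd
  by_contra hcon
  haveI : Fact p.Prime := ⟨hp⟩
  obtain ⟨x, hx⟩ := exists_prime_orderOf_dvd_card' p hpdvd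
  set S : Set G := {g | orderOf g = p} with hS
  -- the normal closure of S
  set N : Subgroup G := Subgroup.normalClosure S with hN
  have hTS : Group.conjugatesOfSet S ⊆ S := by
    intro c hc
    obtain ⟨a, ha, hac⟩ := Group.mem_conjugatesOfSet_iff.1 hc
    obtain ⟨g, rfl⟩ := isConj_iff.1 hac
    have : orderOf (g * a * g⁻¹) = orderOf a := (MulAut.conj g).orderOf_eq a
    simpa [hS, Set.mem_setOf_eq, this] using ha
  have hNc : N = Subgroup.closure (Group.conjugatesOfSet S) := rfl
  -- every element of S commutes with every element of N
  have hSN : ∀ s ∈ S, ∀ b ∈ N, Commute s b := by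
    intro s hs b hb
    rw [hNc] at hb
    induction hb using Subgroup.closure_induction with
    | mem t ht =>
        have hs' : orderOf s = p := hs
        have ht' : orderOf t = p := hTS ht
        exact h s t (hs' ▸ hp) (ht' ▸ hp)
    | one => exact Commute.one_right s
    | mul u v hu hv hcu hcv => exact hcu.mul_right hcv
    | inv u hu hcu => exact hcu.inv_right
  -- N is commutative
  have habel : ∀ a ∈ N, ∀ b ∈ N, Commute a b := by
    intro a ha b hb
    rw [hNc] at ha
    induction ha using Subgroup.closure_induction with
    | mem t ht => exact hSN t (hTS ht) b hb
    | one => exact Commute.one_left b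
    | mul u v hu hv hcu hcv => exact hcu.mul_left hcv
    | inv u hu hcu => exact hcu.inv_left
  -- every element of N has p-th power one
  have hppow : ∀ a ∈ N, a ^ p = 1 := by
    have key : ∀ a ∈ Subgroup.closure (Group.conjugatesOfSet S), a ^ p = 1 := by
      intro a ha
      induction ha using Subgroup.closure_induction with
      | mem t ht => rw [← (hTS ht : orderOf t = p), pow_orderOf_eq_one]
      | one => exact one_pow p
      | mul u v hu hv hcu hcv =>
          have hc : Commute u v := habel u (hNc ▸ hu) v (hNc ▸ hv)
          rw [hc.mul_pow, hcu, hcv, mul_one]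
      | inv u hu hcu => rw [inv_pow, hcu, inv_one]
    intro a ha
    exact key a (hNc ▸ ha)
  have hNnormal : N.Normal := Subgroup.normalClosure_normal
  -- N is a p-group
  have hpgroup : IsPGroup p N := by
    intro g
    exact ⟨1, by ext; simpa [pow_one] using hppow g.1 g.2⟩
  -- card N = p
  obtain ⟨n, hn⟩ := hpgroup.exists_card_eq
  have hxN : x ∈ N := Subgroup.subset_normalClosure (by simpa [hS] using hx)
  have hx1 : x ≠ 1 := by
    intro hx1
    rw [hx1, orderOf_one] at hx
    exact hp.one_lt.ne' hx.symm
  have hn1 : n = 1 := by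
    have hdvd : p ^ n ∣ Nat.card G := hn ▸ Subgroup.card_subgroup_dvd_card N
    by_contra hne
    rcases Nat.lt_or_ge n 1 with h1 | h1
    · interval_cases n
      · have : Nat.card N = 1 := by simpa using hn
        have := Subgroup.eq_bot_of_card_eq N this
        rw [this] at hxN
        exact hx1 (Subgroup.mem_bot.1 hxN)
    · have h2 : 2 ≤ n := lt_of_le_of_ne h1 (Ne.symm hne)
      exact hcon (dvd_trans (pow_dvd_pow p h2) hdvd)
  rw [hn1, pow_one] at hn
  haveI : Fact p.Prime := ⟨hp⟩
  haveI hcyc : IsCyclic N := isCyclic_of_prime_card hn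
  -- the conjugation action G →* MulAut N is trivial since G is perfect
  have hker : commutator G ≤ (MulAut.conjNormal (H := N)).ker := by
    rw [commutator_def]
    rw [Subgroup.commutator_le]
    intro g _ k _
    rw [MonoidHom.mem_ker, map_commutatorElement, commutatorElement_eq_one_iff_commute]
    exact mulAut_comm_of_isCyclic _ _
  rw [hperf, top_le_iff] at hker
  -- hence N is central; in particular x is central
  have hxcen : x ∈ Subgroup.center G := by
    rw [Subgroup.mem_center_iff]
    intro g
    have : MulAut.conjNormal (H := N) g = 1 := by
      exact MonoidHom.mem_ker.1 (hker.symm ▸ Subgroup.mem_top g)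
    have h2 : (MulAut.conjNormal (H := N) g) ⟨x, hxN⟩ = ⟨x, hxN⟩ := by rw [this]; rfl
    have h3 : g * x * g⁻¹ = x := by
      have := congrArg Subtype.val h2
      simpa [MulAut.conjNormal_apply] using this
    calc g * x = (g * x * g⁻¹) * g := by group
    _ = x * g := by rw [h3]
  -- p divides the order of the center
  have hpcen : p ∣ Nat.card (Subgroup.center G) := by
    have : orderOf (⟨x, hxcen⟩ : Subgroup.center G) = p := by
      rw [Subgroup.orderOf_mk, hx]
    exact this ▸ orderOf_dvd_natCard _
  -- p divides the index of the center, by the transfer homomorphism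
  haveI : (Subgroup.center G).FiniteIndex := inferInstance
  have hkert : commutator G ≤ (MonoidHom.transferCenterPow G).ker :=
    open scoped IsMulCommutative in Abelianization.commutator_subset_ker _
  rw [hperf, top_le_iff] at hkert
  have hxt : MonoidHom.transferCenterPow G x = 1 :=
    MonoidHom.mem_ker.1 (hkert.symm ▸ Subgroup.mem_top x)
  have hxpow : x ^ (Subgroup.center G).index = 1 := by
    have := MonoidHom.transferCenterPow_apply (G := G) x
    rw [hxt] at this
    exact this.symm
  have hpindex : p ∣ (Subgroup.center G).index := by
    rw [← hx]
    exact orderOf_dvd_of_pow_eq_one hxpow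
  -- conclude p^2 divides card G
  apply hcon
  rw [← Subgroup.card_mul_index (Subgroup.center G), pow_two]
  exact mul_dvd_mul hpcen hpindex
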